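/- Let φ : ℝ≥0^n → ℝ≥0^n be a monotone standard interference function with a fixed point ρ*. Then the iteration ρ^(k+1) = φ(ρ^(k)) started from ρ^(0) = 0 produces a monotonically nondecreasing sequence that is bounded above by ρ* and converges to ρ*. -/

import Mathlib

lemma stmt9_aux_le {a b : NNReal} (h : ∀ α : NNReal, 1 < α → a < α * b) : a ≤ b := by
  by_contra hab
  push_neg at hab
  rcases eq_or_ne b 0 with hb | hb
  · have := h 2 (by norm_num)
    simp [hb] at this
  · have h1 : (1 : NNReal) < a / b := (one_lt_div (hb.bot_lt)).2 hab
    obtain ⟨α, hα1, hα2⟩ := exists_between h1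
    have h2 : α * b < a := by
      rw [lt_div_iff₀ (hb.bot_lt)] at hα2
      exact hα2
    exact absurd (h α hα1) (not_lt.2 h2.le)

theorem stmt9 {n : ℕ} (φ : (Fin n → NNReal) → (Fin n → NNReal))
    (hmono : Monotone φ)
    (hpos : ∀ ρ i, 0 < φ ρ i)
    (hscale : ∀ α : NNReal, 1 < α → ∀ ρ i, φ (α • ρ) i < α * φ ρ i)
    (ρs : Fin n → NNReal) (hfix : φ ρs = ρs) :
    Monotone (fun k : ℕ => φ^[k] 0) ∧ (∀ k : ℕ, φ^[k] 0 ≤ ρs) ∧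
    Filter.Tendsto (fun k : ℕ => φ^[k] 0) Filter.atTop (nhds ρs) := by
  set x : ℕ → Fin n → NNReal := fun k => φ^[k] 0 with hxdef
  have hsucc : ∀ k, x (k + 1) = φ (x k) := fun k => Function.iterate_succ_apply' φ k 0
  have hmon : Monotone x := by
    apply monotone_nat_of_le_succ
    intro k
    induction k with
    | zero => intro i; exact zero_le
    | succ k ih => rw [hsucc, hsucc]; exact hmono ih
  have hbd : ∀ k, x k ≤ ρs := by
    intro k
    induction k with
    | zero => intro i; exact zero_le
    | succ k ih =>
      rw [hsucc]
      calc φ (x k) ≤ φ ρs := hmono ih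
        _ = ρs := hfix
  refine ⟨hmon, hbd, ?_⟩
  set L : Fin n → NNReal := fun i => ⨆ k, x k i with hLdef
  have hbdd : ∀ i, BddAbove (Set.range fun k => x k i) := fun i =>
    ⟨ρs i, by rintro _ ⟨k, rfl⟩; exact hbd k i⟩
  have hxle : ∀ k, x k ≤ L := fun k i => le_ciSup (hbdd i) k
  have hLle : L ≤ ρs := fun i => ciSup_le fun k => hbd k i
  have hLpos : ∀ i, 0 < L i := by
    intro i
    have h1 : φ 0 i ≤ x 1 i := by
      rw [hsucc 0]; simp [hxdef]
    exact lt_of_lt_of_le (hpos 0 i) (h1.trans (hxle 1 i))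
  have hLφ : L ≤ φ L := by
    intro i
    refine ciSup_le fun k => ?_
    calc x k i ≤ x (k + 1) i := hmon (Nat.le_succ k) i
      _ = φ (x k) i := by rw [hsucc]
      _ ≤ φ L i := hmono (hxle k) i
  have key : ∀ α : NNReal, 1 < α → ∀ i, φ L i < α * L i := by
    intro α hα
    have hα0 : α ≠ 0 := by positivity
    have hk : ∀ i, ∃ k, L i ≤ α * x k i := by
      intro i
      have h1 : L i / α < L i := div_lt_self (hLpos i) hα
      have h1' : L i / α < ⨆ k, x k i := h1
      obtain ⟨k, hk⟩ := exists_lt_of_lt_ciSup h1'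
      refine ⟨k, ?_⟩
      rw [div_lt_iff₀ (hα0.bot_lt)] at hk
      rw [mul_comm] at hk
      exact hk.le
    choose f hf using hk
    set K := Finset.univ.sup f with hKdef
    have hLK : L ≤ α • x K := by
      intro i
      have hfK : f i ≤ K := Finset.le_sup (Finset.mem_univ i)
      calc L i ≤ α * x (f i) i := hf i
        _ ≤ α * x K i := mul_le_mul_right (hmon hfK i) α
        _ = (α • x K) i := by simp [Pi.smul_apply, smul_eq_mul]
    intro i
    calc φ L i ≤ φ (α • x K) i := hmono hLK i
      _ < α * φ (x K) i := hscale α hα (x K) i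
      _ = α * x (K + 1) i := by rw [hsucc]
      _ ≤ α * L i := mul_le_mul_right (hxle (K + 1) i) α
  have hφL : φ L ≤ L := fun i => stmt9_aux_le (fun α hα => key α hα i)
  have hφeq : φ L = L := le_antisymm hφL hLφ
  have hLeq : L = ρs := by
    by_contra hne
    have hlt : ∃ i, L i < ρs i := by
      by_contra h
      push_neg at h
      exact hne (le_antisymm hLle fun i => h i)
    obtain ⟨i0, hi0⟩ := hlt
    haveI : Nonempty (Fin n) := ⟨i0⟩
    obtain ⟨j, hj, hjsup⟩ := Finset.exists_mem_eq_sup Finset.univ Finset.univ_nonempty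
      (fun i => ρs i / L i)
    set α := Finset.univ.sup fun i => ρs i / L i with hαdef
    have hα1 : 1 < α :=
      lt_of_lt_of_le ((one_lt_div (hLpos i0)).2 hi0)
        (Finset.le_sup (f := fun i => ρs i / L i) (Finset.mem_univ i0))
    have hρα : ρs ≤ α • L := by
      intro i
      have hle : ρs i / L i ≤ α := Finset.le_sup (f := fun i => ρs i / L i) (Finset.mem_univ i)
      calc ρs i = (ρs i / L i) * L i := (div_mul_cancel₀ _ (hLpos i).ne').symm
        _ ≤ α * L i := mul_le_mul_left hle _
        _ = (α • L) i := by simp [Pi.smul_apply, smul_eq_mul]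
    have habs : ρs j < ρs j := by
      calc ρs j = φ ρs j := by rw [hfix]
        _ ≤ φ (α • L) j := hmono hρα j
        _ < α * φ L j := hscale α hα1 L j
        _ = α * L j := by rw [hφeq]
        _ = (ρs j / L j) * L j := by rw [← hjsup]
        _ = ρs j := div_mul_cancel₀ _ (hLpos j).ne'
    exact absurd habs (lt_irrefl _)
  have : Filter.Tendsto x Filter.atTop (nhds L) := by
    rw [tendsto_pi_nhds]
    intro i
    exact tendsto_atTop_ciSup (fun a b hab => hmon hab i) (hbdd i)
  rw [← hLeq]
  exact this
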